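/- Let Γ be a distance-biregular graph, ℓ ∈ {0,1}, x ∈ V_ℓ, and for 0 ≤ i ≤ D_ℓ set m_{ℓ,i} = |{y ∈ V : ν^x(y) = q_{ℓ,i}}|. Then for every 0 ≤ i ≤ D_ℓ − 1: k_{ℓ,i} = m_{ℓ,i}, b_{ℓ,i} = (Σ_{j=i+1}^{D_ℓ} m_{ℓ,j}) / (m_{ℓ,i}·(q_{ℓ,i+1} − q_{ℓ,i})), and c_{ℓ,i+1} = (Σ_{j=i+1}^{D_ℓ} m_{ℓ,j}) / (m_{ℓ,i+1}·(q_{ℓ,i+1} − q_{ℓ,i})). -/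

import Mathlib

set_option linter.unusedSectionVars false
set_option maxHeartbeats 1000000

open Finset SimpleGraph

private lemma fin2_aux1 : ∀ p q r : Fin 2, p ≠ q → (p = r ↔ ¬ q = r) := by decide

private lemma fin2_aux2 : ∀ p q r : Fin 2, q ≠ r → (p = q ↔ p = r) → False := by decide

private lemma fin2_cases : ∀ a : Fin 2, a = 0 ∨ a = 1 := by decide

section Aux

variable {V : Type} [Fintype V] [DecidableEq V] {G : SimpleGraph V} [DecidableRel G.Adj]

private lemma walk_parity {σ : V → Fin 2} (hbip : ∀ x y, G.Adj x y → σ x ≠ σ y)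
    {a b : V} (w : G.Walk a b) : σ a = σ b ↔ Even w.length := by
  induction w with
  | nil => simp
  | cons h p ih =>
    rw [SimpleGraph.Walk.length_cons, Nat.even_add_one, ← ih]
    exact fin2_aux1 _ _ _ (hbip _ _ h)

private lemma dist_parity (hconn : G.Connected) {σ : V → Fin 2}
    (hbip : ∀ x y, G.Adj x y → σ x ≠ σ y) (a b : V) :
    σ a = σ b ↔ Even (G.dist a b) := by
  obtain ⟨w, hw⟩ := hconn.exists_walk_length_eq_dist a b
  rw [← hw]; exact walk_parity hbip w

private lemma adj_dist_ne (hconn : G.Connected) {σ : V → Fin 2}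
    (hbip : ∀ x y, G.Adj x y → σ x ≠ σ y) {x y z : V} (h : G.Adj y z) :
    G.dist x y ≠ G.dist x z := by
  intro he
  refine fin2_aux2 (σ x) (σ y) (σ z) (hbip _ _ h) ?_
  rw [dist_parity hconn hbip x y, dist_parity hconn hbip x z, he]

private lemma adj_dist (hconn : G.Connected) {σ : V → Fin 2}
    (hbip : ∀ x y, G.Adj x y → σ x ≠ σ y) {x y z : V} (h : G.Adj y z) :
    G.dist x z = G.dist x y + 1 ∨ G.dist x y = G.dist x z + 1 := by
  have h1 : G.dist x z ≤ G.dist x y + 1 := by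
    have ht := hconn.dist_triangle (u := x) (v := y) (w := z)
    rwa [(SimpleGraph.dist_eq_one_iff_adj).2 h] at ht
  have h2 : G.dist x y ≤ G.dist x z + 1 := by
    have ht := hconn.dist_triangle (u := x) (v := z) (w := y)
    rwa [(SimpleGraph.dist_eq_one_iff_adj).2 h.symm] at ht
  have h3 := adj_dist_ne hconn hbip (x := x) h
  omega

private lemma closer_neighbor (hconn : G.Connected) {x y : V} {i : ℕ}
    (hd : G.dist x y = i + 1) : ∃ z, G.Adj y z ∧ G.dist x z = i := by
  have hy : y ≠ x := by rintro rfl; rw [SimpleGraph.dist_self] at hd; omega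
  obtain ⟨w, hw⟩ := hconn.exists_walk_length_eq_dist y x
  obtain ⟨z, hadj, p, rfl⟩ := SimpleGraph.Walk.exists_eq_cons_of_ne hy w
  rw [SimpleGraph.Walk.length_cons] at hw
  have hdyx : G.dist y x = i + 1 := by rw [SimpleGraph.dist_comm]; exact hd
  have h1 : G.dist x z ≤ i := by
    have hr := SimpleGraph.dist_le p.reverse
    rw [SimpleGraph.Walk.length_reverse] at hr; omega
  have h2 : G.dist x y ≤ G.dist x z + 1 := by
    have ht := hconn.dist_triangle (u := x) (v := z) (w := y)
    rwa [(SimpleGraph.dist_eq_one_iff_adj).2 hadj.symm] at ht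
  exact ⟨z, hadj, by omega⟩

private lemma sphere_nonempty_down (hconn : G.Connected) {x : V} {i m : ℕ} (him : i ≤ m)
    (h : ∃ y, G.dist x y = m) : ∃ y, G.dist x y = i := by
  obtain ⟨j, rfl⟩ := Nat.exists_eq_add_of_le him
  induction j with
  | zero => simpa using h
  | succ j ih =>
    apply ih (by omega)
    obtain ⟨y, hy⟩ := h
    obtain ⟨z, _, hz⟩ := closer_neighbor hconn (x := x) (y := y) (i := i + j) (by omega)
    exact ⟨z, hz⟩

end Aux

theorem stmt10 {V : Type} [Fintype V] [DecidableEq V]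
    (G : SimpleGraph V) [DecidableRel G.Adj]
    (hconn : G.Connected) (hcard : 2 ≤ Fintype.card V)
    (σ : V → Fin 2)
    (hbip : ∀ x y : V, G.Adj x y → σ x ≠ σ y)
    (k : Fin 2 → ℕ)
    (hdeg : ∀ x : V, G.degree x = k (σ x))
    (c b : Fin 2 → ℕ → ℕ)
    (hc : ∀ (x y : V) (i : ℕ), G.dist x y = i →
      (Finset.univ.filter (fun z => G.dist x z = i - 1 ∧ G.Adj y z)).card = c (σ x) i)
    (hb : ∀ (x y : V) (i : ℕ), G.dist x y = i →
      (Finset.univ.filter (fun z => G.dist x z = i + 1 ∧ G.Adj y z)).card = b (σ x) i)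
    (D : Fin 2 → ℕ)
    (hDub : ∀ x y : V, G.dist x y ≤ D (σ x))
    (hDmax : ∀ ℓ : Fin 2, ∃ x y : V, σ x = ℓ ∧ G.dist x y = D ℓ)
    (hD0 : 1 ≤ D 0) (hD01 : D 0 ≤ D 1)
    (kk : Fin 2 → ℕ → ℕ)
    (hkk : ∀ (x : V) (i : ℕ),
      (Finset.univ.filter (fun y => G.dist x y = i)).card = kk (σ x) i)
    (ν : V → V → ℝ)
    (hν0 : ∀ x : V, ν x x = 0)
    (hνL : ∀ x y : V, y ≠ x →
      (G.degree y : ℝ) * ν x y - ∑ z ∈ G.neighborFinset y, ν x z = 1)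
    (q : Fin 2 → ℕ → ℝ)
    (hq : ∀ (ℓ : Fin 2) (m : ℕ), q ℓ m = ∑ j ∈ Finset.Icc 1 m,
      ((Fintype.card V : ℝ) - ∑ t ∈ Finset.range j, (kk ℓ t : ℝ)) /
        ((kk ℓ j : ℝ) * (c ℓ j : ℝ))) :
    ∀ (x : V) (i : ℕ), i ≤ D (σ x) - 1 →
      kk (σ x) i = Nat.card {y : V // ν x y = q (σ x) i} ∧
      (b (σ x) i : ℝ) =
        (∑ j ∈ Finset.Icc (i + 1) (D (σ x)),
          (Nat.card {y : V // ν x y = q (σ x) j} : ℝ)) /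
        ((Nat.card {y : V // ν x y = q (σ x) i} : ℝ) * (q (σ x) (i + 1) - q (σ x) i)) ∧
      (c (σ x) (i + 1) : ℝ) =
        (∑ j ∈ Finset.Icc (i + 1) (D (σ x)),
          (Nat.card {y : V // ν x y = q (σ x) j} : ℝ)) /
        ((Nat.card {y : V // ν x y = q (σ x) (i + 1)} : ℝ) * (q (σ x) (i + 1) - q (σ x) i)) := by
  intro x i hi
  have hDl1 : 1 ≤ D (σ x) := by
    rcases fin2_cases (σ x) with h | h <;> rw [h] <;> omega
  have hiD : i < D (σ x) := by omega
  -- sphere cardinalities around x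
  have hSph : ∀ j, (univ.filter (fun y => G.dist x y = j)).card = kk (σ x) j :=
    fun j => hkk x j
  -- kk positivity
  have hkkpos : ∀ j, j ≤ D (σ x) → 1 ≤ kk (σ x) j := by
    intro j hj
    obtain ⟨x', y', hx', hd'⟩ := hDmax (σ x)
    obtain ⟨z, hz⟩ := sphere_nonempty_down hconn hj ⟨y', hd'⟩
    have h1 := hkk x' j
    rw [hx'] at h1
    rw [← h1]
    exact Finset.card_pos.2 ⟨z, by simp [hz]⟩
  have hSphNe : ∀ j, j ≤ D (σ x) → ∃ y, G.dist x y = j := by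
    intro j hj
    have h1 := hkkpos j hj
    rw [← hSph j] at h1
    obtain ⟨y, hy⟩ := Finset.card_pos.1 h1
    exact ⟨y, (Finset.mem_filter.1 hy).2⟩
  -- total count
  have htot : ∑ t ∈ Finset.range (D (σ x) + 1), kk (σ x) t = Fintype.card V := by
    have h1 := Finset.card_eq_sum_card_fiberwise (s := (univ : Finset V))
      (t := Finset.range (D (σ x) + 1)) (f := fun y => G.dist x y)
      (fun y _ => Finset.mem_range.2
        (show G.dist x y < D (σ x) + 1 by have := hDub x y; omega))
    rw [← Finset.card_univ, h1]
    exact Finset.sum_congr rfl fun j _ => (hSph j).symm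
  have htail : ∀ m, m ≤ D (σ x) + 1 →
      ∑ t ∈ Finset.range m, kk (σ x) t + ∑ t ∈ Finset.Icc m (D (σ x)), kk (σ x) t
        = Fintype.card V := by
    intro m hm
    calc ∑ t ∈ Finset.range m, kk (σ x) t + ∑ t ∈ Finset.Icc m (D (σ x)), kk (σ x) t
        = ∑ t ∈ Finset.Ico 0 m, kk (σ x) t
            + ∑ t ∈ Finset.Ico m (D (σ x) + 1), kk (σ x) t := by
          rw [Finset.range_eq_Ico, Finset.Ico_add_one_right_eq_Icc]
      _ = ∑ t ∈ Finset.Ico 0 (D (σ x) + 1), kk (σ x) t :=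
          Finset.sum_Ico_consecutive _ (Nat.zero_le m) hm
      _ = Fintype.card V := by rw [← Finset.range_eq_Ico, htot]
  have htailpos : ∀ m, m ≤ D (σ x) → 1 ≤ ∑ t ∈ Finset.Icc m (D (σ x)), kk (σ x) t := by
    intro m hm
    calc 1 ≤ kk (σ x) m := hkkpos m hm
      _ ≤ _ := Finset.single_le_sum (f := fun t => kk (σ x) t)
          (fun t _ => Nat.zero_le _) (Finset.mem_Icc.2 ⟨le_rfl, hm⟩)
  -- c positivity
  have hcpos : ∀ j, 1 ≤ j → j ≤ D (σ x) → 1 ≤ c (σ x) j := by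
    intro j h1 h2
    obtain ⟨y, hy⟩ := hSphNe j h2
    obtain ⟨m, rfl⟩ : ∃ m, j = m + 1 := ⟨j - 1, by omega⟩
    obtain ⟨z, hz1, hz2⟩ := closer_neighbor hconn hy
    rw [← hc x y (m + 1) hy]
    refine Finset.card_pos.2 ⟨z, ?_⟩
    simp only [Finset.mem_filter, Finset.mem_univ, true_and]
    exact ⟨by simpa using hz2, hz1⟩
  -- neighbor splitting
  have hNsplit : ∀ (y : V) (j : ℕ), 1 ≤ j → G.dist x y = j →
      G.neighborFinset y =
        (univ.filter (fun z => G.dist x z = j - 1 ∧ G.Adj y z)) ∪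
        (univ.filter (fun z => G.dist x z = j + 1 ∧ G.Adj y z)) := by
    intro y j hj hy
    ext z
    simp only [SimpleGraph.mem_neighborFinset, Finset.mem_union, Finset.mem_filter,
      Finset.mem_univ, true_and]
    constructor
    · intro h
      rcases adj_dist hconn hbip (x := x) h with h' | h'
      · right; exact ⟨by omega, h⟩
      · left; exact ⟨by omega, h⟩
    · rintro (⟨_, h⟩ | ⟨_, h⟩) <;> exact h
  have hNdisj : ∀ (y : V) (j : ℕ), 1 ≤ j →
      Disjoint (univ.filter fun z => G.dist x z = j - 1 ∧ G.Adj y z)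
        (univ.filter fun z => G.dist x z = j + 1 ∧ G.Adj y z) := by
    intro y j hj
    rw [Finset.disjoint_left]
    rintro z h1 h2
    simp only [Finset.mem_filter] at h1 h2
    omega
  have hdegsplit : ∀ (y : V) (j : ℕ), 1 ≤ j → G.dist x y = j →
      G.degree y = c (σ x) j + b (σ x) j := by
    intro y j hj hy
    rw [← SimpleGraph.card_neighborFinset_eq_degree, hNsplit y j hj hy,
      Finset.card_union_of_disjoint (hNdisj y j hj), hc x y j hy, hb x y j hy]
  have hsumsplit : ∀ (y : V) (j : ℕ), 1 ≤ j → G.dist x y = j → ∀ f : ℕ → ℝ,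
      ∑ z ∈ G.neighborFinset y, f (G.dist x z)
        = (c (σ x) j : ℝ) * f (j - 1) + (b (σ x) j : ℝ) * f (j + 1) := by
    intro y j hj hy f
    rw [hNsplit y j hj hy, Finset.sum_union (hNdisj y j hj)]
    congr 1
    · have h1 : ∀ z ∈ univ.filter (fun z => G.dist x z = j - 1 ∧ G.Adj y z),
          f (G.dist x z) = f (j - 1) := fun z hz => by
        rw [(Finset.mem_filter.1 hz).2.1]
      rw [Finset.sum_congr rfl h1, Finset.sum_const, hc x y j hy, nsmul_eq_mul]
    · have h1 : ∀ z ∈ univ.filter (fun z => G.dist x z = j + 1 ∧ G.Adj y z),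
          f (G.dist x z) = f (j + 1) := fun z hz => by
        rw [(Finset.mem_filter.1 hz).2.1]
      rw [Finset.sum_congr rfl h1, Finset.sum_const, hb x y j hy, nsmul_eq_mul]
  -- b at the top is zero
  have hbD : b (σ x) (D (σ x)) = 0 := by
    obtain ⟨y, hy⟩ := hSphNe (D (σ x)) le_rfl
    have he : (univ.filter (fun z => G.dist x z = D (σ x) + 1 ∧ G.Adj y z)) = ∅ := by
      apply Finset.filter_eq_empty_iff.2
      rintro z - ⟨h1, -⟩
      have := hDub x z
      omega
    rw [← hb x y _ hy, he, Finset.card_empty]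
  -- double counting
  have hdouble : ∀ j, kk (σ x) j * b (σ x) j = kk (σ x) (j + 1) * c (σ x) (j + 1) := by
    intro j
    have e1 : kk (σ x) j * b (σ x) j
        = ∑ y ∈ univ.filter (fun y => G.dist x y = j),
            (univ.filter (fun z => G.dist x z = j + 1 ∧ G.Adj y z)).card := by
      rw [Finset.sum_congr rfl (fun y hy => hb x y j (Finset.mem_filter.1 hy).2),
        Finset.sum_const, hSph j, smul_eq_mul]
    have e2 : kk (σ x) (j + 1) * c (σ x) (j + 1)
        = ∑ z ∈ univ.filter (fun z => G.dist x z = j + 1),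
            (univ.filter (fun y => G.dist x y = j ∧ G.Adj z y)).card := by
      have hcy : ∀ z ∈ univ.filter (fun z => G.dist x z = j + 1),
          (univ.filter (fun y => G.dist x y = j ∧ G.Adj z y)).card = c (σ x) (j + 1) := by
        intro z hz
        have := hc x z (j + 1) (Finset.mem_filter.1 hz).2
        simpa using this
      rw [Finset.sum_congr rfl hcy, Finset.sum_const, hSph (j + 1), smul_eq_mul]
    have e3 : ∑ y ∈ univ.filter (fun y => G.dist x y = j),
          (univ.filter (fun z => G.dist x z = j + 1 ∧ G.Adj y z)).card
        = ∑ y : V, ∑ z : V,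
            (if G.dist x y = j ∧ G.dist x z = j + 1 ∧ G.Adj y z then 1 else 0) := by
      rw [Finset.sum_filter]
      refine Finset.sum_congr rfl fun y _ => ?_
      by_cases h : G.dist x y = j
      · simp only [h, if_true, true_and, Finset.card_filter]
      · simp [h]
    have e4 : ∑ z ∈ univ.filter (fun z => G.dist x z = j + 1),
          (univ.filter (fun y => G.dist x y = j ∧ G.Adj z y)).card
        = ∑ z : V, ∑ y : V,
            (if G.dist x z = j + 1 ∧ G.dist x y = j ∧ G.Adj z y then 1 else 0) := by
      rw [Finset.sum_filter]
      refine Finset.sum_congr rfl fun z _ => ?_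
      by_cases h : G.dist x z = j + 1
      · simp only [h, if_true, true_and, Finset.card_filter]
      · simp [h]
    rw [e1, e2, e3, e4, Finset.sum_comm]
    refine Finset.sum_congr rfl fun z _ => Finset.sum_congr rfl fun y _ => ?_
    have hiff : (G.dist x y = j ∧ G.dist x z = j + 1 ∧ G.Adj y z)
        ↔ (G.dist x z = j + 1 ∧ G.dist x y = j ∧ G.Adj z y) := by
      rw [G.adj_comm]; tauto
    rw [if_congr hiff rfl rfl]
  -- q basics
  have hq0 : q (σ x) 0 = 0 := by rw [hq]; simp
  have hqstep : ∀ m, q (σ x) (m + 1) = q (σ x) m +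
      ((Fintype.card V : ℝ) - ∑ t ∈ Finset.range (m + 1), (kk (σ x) t : ℝ)) /
        ((kk (σ x) (m + 1) : ℝ) * (c (σ x) (m + 1) : ℝ)) := by
    intro m
    rw [hq, hq, Finset.sum_Icc_succ_top (by omega : 1 ≤ m + 1)]
  have htailR : ∀ m, m ≤ D (σ x) + 1 →
      (Fintype.card V : ℝ) - ∑ t ∈ Finset.range m, (kk (σ x) t : ℝ)
        = ∑ t ∈ Finset.Icc m (D (σ x)), (kk (σ x) t : ℝ) := by
    intro m hm
    have h1 := htail m hm
    have h2 : ((∑ t ∈ Finset.range m, kk (σ x) t : ℕ) : ℝ)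
        + ((∑ t ∈ Finset.Icc m (D (σ x)), kk (σ x) t : ℕ) : ℝ) = (Fintype.card V : ℝ) := by
      exact_mod_cast congrArg (Nat.cast : ℕ → ℝ) h1
    push_cast at h2
    linarith
  have hdq : ∀ m, m < D (σ x) → q (σ x) (m + 1) - q (σ x) m
      = (∑ t ∈ Finset.Icc (m + 1) (D (σ x)), (kk (σ x) t : ℝ)) /
          ((kk (σ x) (m + 1) : ℝ) * (c (σ x) (m + 1) : ℝ)) := by
    intro m hm
    rw [hqstep m, htailR (m + 1) (by omega)]
    ring
  have hkkposR : ∀ j, j ≤ D (σ x) → (0 : ℝ) < (kk (σ x) j : ℝ) := by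
    intro j hj; exact_mod_cast hkkpos j hj
  have hcposR : ∀ j, 1 ≤ j → j ≤ D (σ x) → (0 : ℝ) < (c (σ x) j : ℝ) := by
    intro j h1 h2; exact_mod_cast hcpos j h1 h2
  have htailposR : ∀ m, m ≤ D (σ x) →
      (0 : ℝ) < ∑ t ∈ Finset.Icc m (D (σ x)), (kk (σ x) t : ℝ) := by
    intro m hm
    have h1 := htailpos m hm
    have h2 : (0 : ℝ) < ((∑ t ∈ Finset.Icc m (D (σ x)), kk (σ x) t : ℕ) : ℝ) := by
      exact_mod_cast h1
    push_cast at h2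
    linarith
  have hdqpos : ∀ m, m < D (σ x) → 0 < q (σ x) (m + 1) - q (σ x) m := by
    intro m hm
    rw [hdq m hm]
    exact div_pos (htailposR (m + 1) (by omega))
      (mul_pos (hkkposR (m + 1) (by omega)) (hcposR (m + 1) (by omega) (by omega)))
  have hqlt : ∀ a b', a < b' → b' ≤ D (σ x) → q (σ x) a < q (σ x) b' := by
    intro a b' hab hbD
    induction b' with
    | zero => omega
    | succ n ih =>
      have hstep : q (σ x) n < q (σ x) (n + 1) := by
        have := hdqpos n (by omega); linarith
      rcases Nat.lt_succ_iff_lt_or_eq.1 hab with h | h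
      · exact lt_trans (ih h (by omega)) hstep
      · rw [h]; exact hstep
  have hqinj : ∀ a b', a ≤ D (σ x) → b' ≤ D (σ x) → q (σ x) a = q (σ x) b' → a = b' := by
    intro a b' ha hb' he
    by_contra hne
    rcases Nat.lt_or_ge a b' with h | h
    · exact absurd he (ne_of_lt (hqlt a b' h hb'))
    · exact absurd he.symm (ne_of_lt (hqlt b' a (by omega) ha))
  -- tail decomposition step
  have htailstep : ∀ m, m + 1 ≤ D (σ x) →
      ∑ t ∈ Finset.Icc (m + 1) (D (σ x)), (kk (σ x) t : ℝ)
        = (kk (σ x) (m + 1) : ℝ) + ∑ t ∈ Finset.Icc (m + 2) (D (σ x)), (kk (σ x) t : ℝ) := by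
    intro m hm
    have hins : Finset.Icc (m + 1) (D (σ x)) = insert (m + 1) (Finset.Icc (m + 2) (D (σ x))) := by
      ext t
      simp only [Finset.mem_Icc, Finset.mem_insert]
      omega
    rw [hins, Finset.sum_insert (by simp [Finset.mem_Icc])]
  -- the Laplacian equation for q ∘ dist
  have hLf : ∀ y, y ≠ x →
      (G.degree y : ℝ) * q (σ x) (G.dist x y)
        - ∑ z ∈ G.neighborFinset y, q (σ x) (G.dist x z) = 1 := by
    intro y hy
    have hj1 : 1 ≤ G.dist x y := hconn.pos_dist_of_ne (Ne.symm hy)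
    have hjD : G.dist x y ≤ D (σ x) := hDub x y
    obtain ⟨m, hm⟩ : ∃ m, G.dist x y = m + 1 := ⟨G.dist x y - 1, by omega⟩
    rw [hm]
    have hsum := hsumsplit y (m + 1) (by omega) hm (fun t => q (σ x) t)
    simp only [Nat.add_sub_cancel] at hsum
    rw [hsum, hdegsplit y (m + 1) (by omega) hm]
    push_cast
    have hd1 : q (σ x) (m + 1) - q (σ x) m
        = (∑ t ∈ Finset.Icc (m + 1) (D (σ x)), (kk (σ x) t : ℝ)) /
            ((kk (σ x) (m + 1) : ℝ) * (c (σ x) (m + 1) : ℝ)) := hdq m (by omega)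
    have hK1 : (0 : ℝ) < (kk (σ x) (m + 1) : ℝ) := hkkposR (m + 1) (by omega)
    have hC1 : (0 : ℝ) < (c (σ x) (m + 1) : ℝ) := hcposR (m + 1) (by omega) (by omega)
    have h1 : (c (σ x) (m + 1) : ℝ) * (q (σ x) (m + 1) - q (σ x) m)
        = (∑ t ∈ Finset.Icc (m + 1) (D (σ x)), (kk (σ x) t : ℝ)) / (kk (σ x) (m + 1) : ℝ) := by
      rw [hd1]
      field_simp
    by_cases hcase : m + 1 = D (σ x)
    · have hb0 : (b (σ x) (m + 1) : ℝ) = 0 := by rw [hcase, hbD]; norm_num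
      have hA : ∑ t ∈ Finset.Icc (m + 1) (D (σ x)), (kk (σ x) t : ℝ) = (kk (σ x) (m + 1) : ℝ) := by
        rw [hcase, Finset.Icc_self, Finset.sum_singleton]
      rw [hA] at h1
      rw [hb0]
      have h2 : (kk (σ x) (m + 1) : ℝ) / (kk (σ x) (m + 1) : ℝ) = 1 := by
        field_simp
      rw [h2] at h1
      ring_nf
      ring_nf at h1
      linarith
    · have hmD : m + 2 ≤ D (σ x) := by omega
      have hK2 : (0 : ℝ) < (kk (σ x) (m + 2) : ℝ) := hkkposR (m + 2) hmD
      have hC2 : (0 : ℝ) < (c (σ x) (m + 2) : ℝ) := hcposR (m + 2) (by omega) hmD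
      have hdb : (kk (σ x) (m + 1) : ℝ) * (b (σ x) (m + 1) : ℝ)
          = (kk (σ x) (m + 2) : ℝ) * (c (σ x) (m + 2) : ℝ) := by
        exact_mod_cast congrArg (Nat.cast : ℕ → ℝ) (hdouble (m + 1))
      have hB1 : (0 : ℝ) < (b (σ x) (m + 1) : ℝ) := by
        have hbne : b (σ x) (m + 1) ≠ 0 := by
          intro h0
          have hdd := hdouble (m + 1)
          rw [h0, Nat.mul_zero] at hdd
          have hp : 0 < kk (σ x) (m + 2) * c (σ x) (m + 2) :=
            Nat.mul_pos (hkkpos _ hmD) (hcpos _ (by omega) hmD)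
          exact (Nat.pos_iff_ne_zero.mp hp) hdd.symm
        exact_mod_cast Nat.pos_of_ne_zero hbne
      have hd2 : q (σ x) (m + 2) - q (σ x) (m + 1)
          = (∑ t ∈ Finset.Icc (m + 2) (D (σ x)), (kk (σ x) t : ℝ)) /
              ((kk (σ x) (m + 2) : ℝ) * (c (σ x) (m + 2) : ℝ)) := hdq (m + 1) (by omega)
      have h2 : (b (σ x) (m + 1) : ℝ) * (q (σ x) (m + 2) - q (σ x) (m + 1))
          = (∑ t ∈ Finset.Icc (m + 2) (D (σ x)), (kk (σ x) t : ℝ)) / (kk (σ x) (m + 1) : ℝ) := by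
        rw [hd2, ← hdb]
        field_simp
      have h3 : (∑ t ∈ Finset.Icc (m + 1) (D (σ x)), (kk (σ x) t : ℝ)) / (kk (σ x) (m + 1) : ℝ)
          - (∑ t ∈ Finset.Icc (m + 2) (D (σ x)), (kk (σ x) t : ℝ)) / (kk (σ x) (m + 1) : ℝ) = 1 := by
        rw [htailstep m (by omega)]
        field_simp
        ring
      ring_nf
      ring_nf at h1 h2 h3
      linarith
  -- uniqueness: ν x = q ∘ dist
  have hν : ∀ y, ν x y = q (σ x) (G.dist x y) := by
    set g : V → ℝ := fun y => ν x y - q (σ x) (G.dist x y) with hg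
    have hgx : g x = 0 := by simp [hg, hν0 x, SimpleGraph.dist_self, hq0]
    have hA : ∀ y, y ≠ x →
        (G.degree y : ℝ) * g y - ∑ z ∈ G.neighborFinset y, g z = 0 := by
      intro y hy
      have h1 := hνL x y hy
      have h2 := hLf y hy
      simp only [hg]
      rw [Finset.sum_sub_distrib]
      ring_nf
      ring_nf at h1 h2
      linarith
    have hswap : ∑ y : V, ∑ z ∈ G.neighborFinset y, g z
        = ∑ y : V, (G.degree y : ℝ) * g y := by
      have hrw : ∀ y : V, ∑ z ∈ G.neighborFinset y, g z
          = ∑ z : V, if G.Adj y z then g z else 0 := by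
        intro y
        rw [SimpleGraph.neighborFinset_eq_filter, Finset.sum_filter]
      rw [Finset.sum_congr rfl fun y _ => hrw y, Finset.sum_comm]
      refine Finset.sum_congr rfl fun z _ => ?_
      have h1 : ∑ y : V, (if G.Adj y z then g z else 0)
          = ((univ.filter (fun y => G.Adj y z)).card : ℝ) * g z := by
        rw [← Finset.sum_filter, Finset.sum_const, nsmul_eq_mul]
      rw [h1]
      congr 1
      have h2 : univ.filter (fun y => G.Adj y z) = G.neighborFinset z := by
        ext y
        simp [SimpleGraph.mem_neighborFinset, G.adj_comm]
      rw [h2, SimpleGraph.card_neighborFinset_eq_degree]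
    have hTot : ∑ y : V, ((G.degree y : ℝ) * g y - ∑ z ∈ G.neighborFinset y, g z) = 0 := by
      rw [Finset.sum_sub_distrib, hswap, sub_self]
    have hFx : (G.degree x : ℝ) * g x - ∑ z ∈ G.neighborFinset x, g z = 0 := by
      rw [← Finset.add_sum_erase _ _ (Finset.mem_univ x)] at hTot
      have h0 : ∑ y ∈ univ.erase x,
          ((G.degree y : ℝ) * g y - ∑ z ∈ G.neighborFinset y, g z) = 0 :=
        Finset.sum_eq_zero fun y hy => hA y (Finset.ne_of_mem_erase hy)
      linarith
    have hA' : ∀ y, (G.degree y : ℝ) * g y = ∑ z ∈ G.neighborFinset y, g z := by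
      intro y
      by_cases hy : y = x
      · subst hy; linarith
      · have := hA y hy; linarith
    obtain ⟨y₀, -, hy₀⟩ := Finset.exists_max_image (univ : Finset V) g ⟨x, Finset.mem_univ x⟩
    have hclosed : ∀ a b', G.Adj a b' → g a = g y₀ → g b' = g y₀ := by
      intro a b' hab ha
      by_contra hb'
      have hlt : g b' < g y₀ := lt_of_le_of_ne (hy₀ b' (Finset.mem_univ _)) hb'
      have h1 : ∑ z ∈ G.neighborFinset a, g z < ∑ _z ∈ G.neighborFinset a, g y₀ :=
        Finset.sum_lt_sum (fun z _ => hy₀ z (Finset.mem_univ z))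
          ⟨b', (SimpleGraph.mem_neighborFinset G a b').2 hab, hlt⟩
      rw [Finset.sum_const, nsmul_eq_mul, SimpleGraph.card_neighborFinset_eq_degree] at h1
      have h2 := hA' a
      rw [ha] at h2
      linarith
    have hwalk : ∀ (a b' : V) (w : G.Walk a b'), g a = g y₀ → g b' = g y₀ := by
      intro a b' w
      induction w with
      | nil => exact id
      | cons h p ih => exact fun ha => ih (hclosed _ _ h ha)
    have hall : ∀ v, g v = g y₀ := fun v =>
      hwalk y₀ v (hconn.preconnected y₀ v).some rfl
    intro y
    have h1 := hall y
    have h2 := hall x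
    rw [hgx] at h2
    have h3 : g y = 0 := by rw [h1, ← h2]
    simp only [hg] at h3
    linarith
  -- identification of level sets
  have hm : ∀ j, j ≤ D (σ x) → Nat.card {y : V // ν x y = q (σ x) j} = kk (σ x) j := by
    intro j hj
    have he : ∀ y : V, ν x y = q (σ x) j ↔ G.dist x y = j := by
      intro y
      rw [hν y]
      constructor
      · intro h; exact hqinj _ _ (hDub x y) hj h
      · intro h; rw [h]
    rw [Nat.card_congr (Equiv.subtypeEquivRight he), Nat.card_eq_fintype_card,
      Fintype.card_subtype]
    exact hSph j
  have hmR : ∀ j, j ≤ D (σ x) →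
      (Nat.card {y : V // ν x y = q (σ x) j} : ℝ) = (kk (σ x) j : ℝ) := by
    intro j hj; exact_mod_cast hm j hj
  have hMsum : ∑ j ∈ Finset.Icc (i + 1) (D (σ x)),
      (Nat.card {y : V // ν x y = q (σ x) j} : ℝ)
        = ∑ j ∈ Finset.Icc (i + 1) (D (σ x)), (kk (σ x) j : ℝ) :=
    Finset.sum_congr rfl fun j hj => hmR j (Finset.mem_Icc.1 hj).2
  -- final computations
  have hK1 : (0 : ℝ) < (kk (σ x) i : ℝ) := hkkposR i (by omega)
  have hK2 : (0 : ℝ) < (kk (σ x) (i + 1) : ℝ) := hkkposR (i + 1) (by omega)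
  have hC2 : (0 : ℝ) < (c (σ x) (i + 1) : ℝ) := hcposR (i + 1) (by omega) (by omega)
  have hApos : (0 : ℝ) < ∑ t ∈ Finset.Icc (i + 1) (D (σ x)), (kk (σ x) t : ℝ) :=
    htailposR (i + 1) (by omega)
  have hdqi := hdq i hiD
  have hdbi : (kk (σ x) i : ℝ) * (b (σ x) i : ℝ)
      = (kk (σ x) (i + 1) : ℝ) * (c (σ x) (i + 1) : ℝ) := by
    exact_mod_cast congrArg (Nat.cast : ℕ → ℝ) (hdouble i)
  have hden1 : (kk (σ x) i : ℝ) *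
      ((∑ t ∈ Finset.Icc (i + 1) (D (σ x)), (kk (σ x) t : ℝ)) /
        ((kk (σ x) (i + 1) : ℝ) * (c (σ x) (i + 1) : ℝ))) ≠ 0 :=
    ne_of_gt (mul_pos hK1 (div_pos hApos (mul_pos hK2 hC2)))
  have hden2 : (kk (σ x) (i + 1) : ℝ) *
      ((∑ t ∈ Finset.Icc (i + 1) (D (σ x)), (kk (σ x) t : ℝ)) /
        ((kk (σ x) (i + 1) : ℝ) * (c (σ x) (i + 1) : ℝ))) ≠ 0 :=
    ne_of_gt (mul_pos hK2 (div_pos hApos (mul_pos hK2 hC2)))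
  refine ⟨(hm i (by omega)).symm, ?_, ?_⟩
  · rw [hMsum, hmR i (by omega), hdqi, eq_div_iff hden1]
    field_simp
    linear_combination hdbi
  · rw [hMsum, hmR (i + 1) (by omega), hdqi, eq_div_iff hden2]
    field_simp
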